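/- Suppose a finite group G acts line-transitively on a finite regular linear space which is not a projective plane (i.e. b > v), and let H, K be subgroups with G_α ≤ H < K ≤ G for a point stabilizer G_α, with |K : H| = 2. Then a contradiction follows; i.e., no such chain with index 2 can exist. -/

import Mathlib

/-- A finite regular linear space: a finite point set `P`, a set of lines
(each a finset of points), such that every line has exactly `k` points,
every point lies on exactly `r` lines, and any two distinct points lie on
exactly one common line. -/
structure RegularLinearSpace (P : Type*) [Fintype P] [DecidableEq P] where
  lines : Finset (Finset P)
  k : ℕ
  r : ℕ
  two_le_k : 2 ≤ k
  line_card : ∀ L ∈ lines, L.card = k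
  point_deg : ∀ p : P, (lines.filter (fun L => p ∈ L)).card = r
  exists_unique_line : ∀ p q : P, p ≠ q → ∃! L, L ∈ lines ∧ p ∈ L ∧ q ∈ L

open Finset

set_option linter.unusedSectionVars false
open scoped Classical
namespace Stmt16Aux

noncomputable section

variable {P G : Type*} [Fintype P] [DecidableEq P] [Group G] [Fintype G] [MulAction G P]

/-- Translate of a finset under the action of `g`. -/
def tr (g : G) (A : Finset P) : Finset P := A.image (fun p => g • p)

lemma card_tr (g : G) (A : Finset P) : (tr g A).card = A.card :=
  Finset.card_image_of_injective _ (MulAction.injective g)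

lemma mem_tr {g : G} {A : Finset P} {p : P} : p ∈ tr g A ↔ ∃ q ∈ A, g • q = p := by
  simp [tr]

lemma mem_tr' {g : G} {A : Finset P} {p : P} : p ∈ tr g A ↔ g⁻¹ • p ∈ A := by
  rw [mem_tr]
  constructor
  · rintro ⟨q, hq, rfl⟩; simpa
  · intro h; exact ⟨g⁻¹ • p, h, by simp⟩

lemma tr_tr (a b : G) (A : Finset P) : tr a (tr b A) = tr (a * b) A := by
  simp [tr, Finset.image_image, Function.comp_def, mul_smul]

/-- The orbit of `α` under the subgroup `J`, as a finset. -/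
def delta (α : P) (J : Subgroup G) : Finset P :=
  Finset.univ.image (fun h : J => (h : G) • α)

lemma mem_delta {α : P} {J : Subgroup G} {p : P} :
    p ∈ delta α J ↔ ∃ h : G, h ∈ J ∧ h • α = p := by
  constructor
  · intro hp
    rcases Finset.mem_image.1 hp with ⟨h, -, rfl⟩
    exact ⟨h, h.2, rfl⟩
  · rintro ⟨h, hh, rfl⟩
    exact Finset.mem_image.2 ⟨⟨h, hh⟩, Finset.mem_univ _, rfl⟩

lemma alpha_mem_delta (α : P) (J : Subgroup G) : α ∈ delta α J :=
  mem_delta.2 ⟨1, J.one_mem, one_smul _ _⟩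

lemma tr_delta_of_mem {α : P} {J : Subgroup G} {c : G} (hc : c ∈ J) :
    tr c (delta α J) = delta α J := by
  have hsub : tr c (delta α J) ⊆ delta α J := by
    intro x hx
    rcases mem_tr.1 hx with ⟨q, hq, rfl⟩
    rcases mem_delta.1 hq with ⟨h, hh, rfl⟩
    exact mem_delta.2 ⟨c * h, J.mul_mem hc hh, (mul_smul c h α)⟩
  exact Finset.eq_of_subset_of_card_le hsub (le_of_eq (card_tr c _).symm)

lemma block {α : P} {J : Subgroup G} (hJ : MulAction.stabilizer G α ≤ J)
    {g g' : G} {p : P} (hp : p ∈ tr g (delta α J)) (hp' : p ∈ tr g' (delta α J)) :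
    tr g (delta α J) = tr g' (delta α J) := by
  rcases mem_tr.1 hp with ⟨q, hq, hgq⟩
  rcases mem_delta.1 hq with ⟨h, hh, rfl⟩
  rcases mem_tr.1 hp' with ⟨q', hq', hgq'⟩
  rcases mem_delta.1 hq' with ⟨h', hh', rfl⟩
  have heq : (g * h) • α = (g' * h') • α := by
    rw [mul_smul, mul_smul, hgq, hgq']
  have hstab : h'⁻¹ * (g'⁻¹ * g) * h ∈ MulAction.stabilizer G α := by
    rw [MulAction.mem_stabilizer_iff]
    have : (g' * h')⁻¹ • ((g * h) • α) = α := by rw [heq]; simp [mul_smul]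
    calc (h'⁻¹ * (g'⁻¹ * g) * h) • α = ((g' * h')⁻¹ * (g * h)) • α := by
          congr 1; group
      _ = α := by rw [mul_smul, this]
  have hmem : g'⁻¹ * g ∈ J := by
    have := J.mul_mem (J.mul_mem hh' (hJ hstab)) (J.inv_mem hh)
    have heq2 : h' * (h'⁻¹ * (g'⁻¹ * g) * h) * h⁻¹ = g'⁻¹ * g := by group
    rwa [heq2] at this
  calc tr g (delta α J) = tr g' (tr (g'⁻¹ * g) (delta α J)) := by
        rw [tr_tr]; congr 1; group
    _ = tr g' (delta α J) := by rw [tr_delta_of_mem hmem]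

/-- The relation: `p` and `q` lie in a common translate of `delta α J`. -/
def rel (α : P) (J : Subgroup G) (p q : P) : Prop :=
  ∃ g : G, p ∈ tr g (delta α J) ∧ q ∈ tr g (delta α J)


lemma rel_smul {α : P} {J : Subgroup G} (g : G) {p q : P} (h : rel α J p q) :
    rel α J (g • p) (g • q) := by
  rcases h with ⟨g₀, hp, hq⟩
  refine ⟨g * g₀, ?_, ?_⟩ <;> rw [← tr_tr] <;> exact mem_tr.2 ⟨_, ‹_›, rfl⟩

/-- The orbit of `α` under `G`, as a finset. -/
def orb (G : Type*) [Group G] [Fintype G] {P : Type*} [Fintype P] [DecidableEq P]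
    [MulAction G P] (α : P) : Finset P :=
  Finset.univ.image (fun g : G => g • α)

lemma mem_orb {α p : P} : p ∈ orb G α ↔ ∃ g : G, g • α = p := by
  simp [orb]

lemma mem_orb_of_mem_tr {α : P} {J : Subgroup G} {g : G} {p : P}
    (hp : p ∈ tr g (delta α J)) : p ∈ orb G α := by
  rcases mem_tr.1 hp with ⟨q, hq, rfl⟩
  rcases mem_delta.1 hq with ⟨h, -, rfl⟩
  exact mem_orb.2 ⟨g * h, mul_smul g h α⟩

lemma filter_rel_eq {α : P} {J : Subgroup G} (hJ : MulAction.stabilizer G α ≤ J)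
    {g : G} {p : P} (hp : p ∈ tr g (delta α J)) :
    Finset.univ.filter (fun q => rel α J p q) = tr g (delta α J) := by
  ext q
  simp only [Finset.mem_filter, Finset.mem_univ, true_and]
  constructor
  · rintro ⟨g₀, hp₀, hq₀⟩
    rwa [block hJ hp₀ hp] at hq₀
  · intro hq
    exact ⟨g, hp, hq⟩


lemma rel_iff {α : P} {J : Subgroup G} (hJ : MulAction.stabilizer G α ≤ J)
    {g : G} {p : P} (hp : p ∈ tr g (delta α J)) (q : P) :
    rel α J p q ↔ q ∈ tr g (delta α J) := by
  constructor
  · rintro ⟨g₀, hp₀, hq₀⟩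
    rwa [block hJ hp₀ hp] at hq₀
  · intro hq
    exact ⟨g, hp, hq⟩

/-- The unique line through two distinct points. -/
def lineOf (S : RegularLinearSpace P) (p q : P) : Finset P :=
  if h : p ≠ q then (S.exists_unique_line p q h).choose else ∅

lemma lineOf_spec (S : RegularLinearSpace P) {p q : P} (h : p ≠ q) :
    lineOf S p q ∈ S.lines ∧ p ∈ lineOf S p q ∧ q ∈ lineOf S p q := by
  rw [lineOf, dif_pos h]
  exact (S.exists_unique_line p q h).choose_spec.1

lemma lineOf_eq (S : RegularLinearSpace P) {p q : P} (h : p ≠ q) {L : Finset P}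
    (hL : L ∈ S.lines) (hp : p ∈ L) (hq : q ∈ L) : lineOf S p q = L := by
  rw [lineOf, dif_pos h]
  exact ((S.exists_unique_line p q h).choose_spec.2 L ⟨hL, hp, hq⟩).symm

/-- Number of ordered pairs of distinct related points on a line. -/
def cnt (α : P) (J : Subgroup G) (L : Finset P) : ℕ :=
  (L.offDiag.filter (fun pq => rel α J pq.1 pq.2)).card

lemma cnt_tr (α : P) (J : Subgroup G) (g : G) (L : Finset P) :
    cnt α J (tr g L) = cnt α J L := by
  unfold cnt
  refine Finset.card_bij' (fun pq _ => (g⁻¹ • pq.1, g⁻¹ • pq.2))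
    (fun pq _ => (g • pq.1, g • pq.2)) ?_ ?_ ?_ ?_
  · rintro ⟨a, b⟩ hab
    simp only [Finset.mem_filter, Finset.mem_offDiag] at hab ⊢
    obtain ⟨⟨ha, hb, hne⟩, hrel⟩ := hab
    exact ⟨⟨mem_tr'.1 ha, mem_tr'.1 hb,
      fun h => hne (MulAction.injective g⁻¹ h)⟩, rel_smul g⁻¹ hrel⟩
  · rintro ⟨a, b⟩ hab
    simp only [Finset.mem_filter, Finset.mem_offDiag] at hab ⊢
    obtain ⟨⟨ha, hb, hne⟩, hrel⟩ := hab
    exact ⟨⟨mem_tr.2 ⟨a, ha, rfl⟩, mem_tr.2 ⟨b, hb, rfl⟩,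
      fun h => hne (MulAction.injective g h)⟩, rel_smul g hrel⟩
  · rintro ⟨a, b⟩ _; simp
  · rintro ⟨a, b⟩ _; simp

lemma key (S : RegularLinearSpace P)
    (htrans : ∀ L ∈ S.lines, ∀ L' ∈ S.lines, ∃ g : G, Finset.image (g • ·) L = L')
    (α : P) (J : Subgroup G) (hJ : MulAction.stabilizer G α ≤ J)
    (hne : S.lines.Nonempty) :
    ∃ x : ℕ, S.lines.card * x = (orb G α).card * ((delta α J).card - 1) := by
  obtain ⟨L₀, hL₀⟩ := hne
  refine ⟨cnt α J L₀, ?_⟩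
  set T : Finset (P × P) :=
    Finset.univ.filter (fun pq : P × P => rel α J pq.1 pq.2 ∧ pq.1 ≠ pq.2) with hT
  have hTcard1 : T.card = S.lines.card * cnt α J L₀ := by
    have hmap : ∀ pq ∈ T, lineOf S pq.1 pq.2 ∈ S.lines := by
      intro pq hpq
      have h := (Finset.mem_filter.1 hpq).2
      exact (lineOf_spec S h.2).1
    rw [Finset.card_eq_sum_card_fiberwise hmap]
    have hfib : ∀ L ∈ S.lines,
        (T.filter (fun pq => lineOf S pq.1 pq.2 = L)) =
          L.offDiag.filter (fun pq => rel α J pq.1 pq.2) := by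
      intro L hL
      ext ⟨a, b⟩
      simp only [hT, Finset.mem_filter, Finset.mem_univ, true_and, Finset.mem_offDiag]
      constructor
      · rintro ⟨⟨hrel, hne'⟩, hline⟩
        obtain ⟨-, hp, hq⟩ := lineOf_spec S hne'
        rw [hline] at hp hq
        exact ⟨⟨hp, hq, hne'⟩, hrel⟩
      · rintro ⟨⟨hp, hq, hne'⟩, hrel⟩
        exact ⟨⟨hrel, hne'⟩, lineOf_eq S hne' hL hp hq⟩
    calc ∑ L ∈ S.lines, (T.filter (fun pq => lineOf S pq.1 pq.2 = L)).card
        = ∑ L ∈ S.lines, cnt α J L := by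
          refine Finset.sum_congr rfl fun L hL => ?_
          rw [hfib L hL]; rfl
      _ = ∑ _L ∈ S.lines, cnt α J L₀ := by
          refine Finset.sum_congr rfl fun L hL => ?_
          obtain ⟨g, hg⟩ := htrans L₀ hL₀ L hL
          have : tr g L₀ = L := hg
          rw [← this, cnt_tr]
      _ = S.lines.card * cnt α J L₀ := by
          rw [Finset.sum_const, smul_eq_mul]
  have hTcard2 : T.card = (orb G α).card * ((delta α J).card - 1) := by
    have hmap : ∀ pq ∈ T, pq.1 ∈ orb G α := by
      intro pq hpq
      obtain ⟨⟨g, hp, -⟩, -⟩ := (Finset.mem_filter.1 hpq).2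
      exact mem_orb_of_mem_tr hp
    rw [Finset.card_eq_sum_card_fiberwise hmap]
    have hfib : ∀ p ∈ orb G α,
        (T.filter (fun pq => pq.1 = p)).card = (delta α J).card - 1 := by
      intro p hp
      obtain ⟨g, hg⟩ := mem_orb.1 hp
      have hpg : p ∈ tr g (delta α J) := mem_tr.2 ⟨α, alpha_mem_delta α J, hg⟩
      have heq : T.filter (fun pq => pq.1 = p) =
          ((tr g (delta α J)).erase p).image (fun q => (p, q)) := by
        ext ⟨a, b⟩
        simp only [hT, Finset.mem_filter, Finset.mem_univ, true_and,
          Finset.mem_image, Finset.mem_erase, Prod.mk.injEq]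
        constructor
        · rintro ⟨⟨hrel, hne'⟩, rfl⟩
          exact ⟨b, ⟨fun h => hne' h.symm, (rel_iff hJ hpg b).1 hrel⟩, rfl, rfl⟩
        · rintro ⟨q, ⟨hqp, hq⟩, rfl, rfl⟩
          exact ⟨⟨(rel_iff hJ hpg q).2 hq, fun h => hqp h.symm⟩, rfl⟩
      rw [heq, Finset.card_image_of_injective _ (fun x y h => congrArg Prod.snd h),
        Finset.card_erase_of_mem hpg, card_tr]
    calc ∑ p ∈ orb G α, (T.filter (fun pq => pq.1 = p)).card
        = ∑ _p ∈ orb G α, ((delta α J).card - 1) :=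
          Finset.sum_congr rfl hfib
      _ = (orb G α).card * ((delta α J).card - 1) := by
          rw [Finset.sum_const, smul_eq_mul]
  rw [← hTcard1, hTcard2]

lemma delta_card (α : P) (J : Subgroup G) :
    (delta α J).card = (MulAction.stabilizer G α).relIndex J := by
  have hkey : (MulAction.stabilizer G α).subgroupOf J = MulAction.stabilizer J α := by
    ext; rfl
  rw [Subgroup.relIndex, hkey, MulAction.index_stabilizer]
  have horb : MulAction.orbit J α = ↑(delta α J) := by
    ext p
    simp only [MulAction.mem_orbit_iff, Finset.coe_image, Set.mem_image,
      Finset.mem_coe, Subgroup.smul_def]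
    constructor
    · rintro ⟨⟨h, hh⟩, rfl⟩
      exact Finset.mem_coe.2 (mem_delta.2 ⟨h, hh, rfl⟩)
    · intro hp
      obtain ⟨h, hh, rfl⟩ := mem_delta.1 (Finset.mem_coe.1 hp)
      exact ⟨⟨h, hh⟩, rfl⟩
  rw [horb, Set.ncard_coe_finset]

lemma endgame {b v w m xH xK : ℕ} (hw : 1 ≤ w) (hwv : w ≤ v) (hbv : v < b)
    (hm : 1 ≤ m) (h1 : b * xH = w * (m - 1)) (h2 : b * xK = w * (2 * m - 1)) :
    False := by
  have hb : 0 < b := by omega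
  rcases eq_or_lt_of_le hm with hm1 | hm2
  · have hm1' : 2 * m - 1 = 1 := by omega
    have h2' : b * xK = w := by rw [h2, hm1', Nat.mul_one]
    rcases Nat.eq_zero_or_pos xK with h0 | h0
    · rw [h0, Nat.mul_zero] at h2'; omega
    · have : b ≤ b * xK := Nat.le_mul_of_pos_right _ h0
      omega
  · have hkey : xH * (2 * m - 1) = xK * (m - 1) := by
      have e : b * (xH * (2 * m - 1)) = b * (xK * (m - 1)) := by
        calc b * (xH * (2 * m - 1)) = (b * xH) * (2 * m - 1) := by ring
          _ = (w * (m - 1)) * (2 * m - 1) := by rw [h1]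
          _ = (w * (2 * m - 1)) * (m - 1) := by ring
          _ = (b * xK) * (m - 1) := by rw [h2]
          _ = b * (xK * (m - 1)) := by ring
      exact Nat.eq_of_mul_eq_mul_left hb e
    have hcop : Nat.Coprime (m - 1) (2 * m - 1) := by
      have h4 : 2 * m - 1 = 1 + (m - 1) * 2 := by omega
      rw [h4, Nat.coprime_add_mul_left_right]
      exact Nat.coprime_one_right _
    have hdvd : (m - 1) ∣ xH := by
      refine hcop.dvd_of_dvd_mul_right ?_
      rw [hkey]
      exact dvd_mul_left _ _
    obtain ⟨s, rfl⟩ := hdvd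
    have h1' : (b * s) * (m - 1) = w * (m - 1) := by
      calc (b * s) * (m - 1) = b * ((m - 1) * s) := by ring
        _ = w * (m - 1) := h1
    have hbsw : b * s = w := Nat.eq_of_mul_eq_mul_right (by omega) h1'
    rcases Nat.eq_zero_or_pos s with h0 | h0
    · rw [h0, Nat.mul_zero] at hbsw; omega
    · have : b ≤ b * s := Nat.le_mul_of_pos_right _ h0
      omega

end

end Stmt16Aux


/-- If `G` acts line-transitively on a finite regular linear space which is
not a projective plane (`b > v`), there is no chain of subgroups
`G_α ≤ H < K ≤ G` with `|K : H| = 2`. -/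
theorem stmt_16 {P G : Type*} [Fintype P] [DecidableEq P]
    [Group G] [Fintype G] [MulAction G P]
    (S : RegularLinearSpace P)
    (hpres : ∀ (g : G), ∀ L ∈ S.lines, Finset.image (g • ·) L ∈ S.lines)
    (htrans : ∀ L ∈ S.lines, ∀ L' ∈ S.lines,
      ∃ g : G, Finset.image (g • ·) L = L')
    (hnpp : Fintype.card P < S.lines.card)
    (α : P) (H K : Subgroup G)
    (hstab : MulAction.stabilizer G α ≤ H)
    (hHK : H < K)
    (hindex : H.relIndex K = 2) :
    False := by
  classical
  have hvpos : 0 < Fintype.card P := Fintype.card_pos_iff.2 ⟨α⟩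
  have hne : S.lines.Nonempty := Finset.card_pos.1 (by omega)
  have hKstab : MulAction.stabilizer G α ≤ K := le_trans hstab hHK.le
  obtain ⟨xH, hxH⟩ := Stmt16Aux.key S htrans α H hstab hne
  obtain ⟨xK, hxK⟩ := Stmt16Aux.key S htrans α K hKstab hne
  have hrel := Subgroup.relIndex_mul_relIndex (H := MulAction.stabilizer G α) (K := H) (L := K) hstab hHK.le
  rw [hindex] at hrel
  have hmK : (Stmt16Aux.delta (G := G) α K).card = (Stmt16Aux.delta (G := G) α H).card * 2 := by
    rw [Stmt16Aux.delta_card, Stmt16Aux.delta_card, ← hrel]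
  have hw : 1 ≤ (Stmt16Aux.orb G α).card :=
    Finset.card_pos.2 ⟨α, Stmt16Aux.mem_orb.2 ⟨1, one_smul _ _⟩⟩
  have hwv : (Stmt16Aux.orb G α).card ≤ Fintype.card P := Finset.card_le_univ _
  have hm : 1 ≤ (Stmt16Aux.delta (G := G) α H).card :=
    Finset.card_pos.2 ⟨α, Stmt16Aux.alpha_mem_delta α H⟩
  have hxK' : S.lines.card * xK =
      (Stmt16Aux.orb G α).card * (2 * (Stmt16Aux.delta (G := G) α H).card - 1) := by
    rw [hxK, hmK]
    congr 1
    omega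
  exact Stmt16Aux.endgame hw hwv hnpp hm hxH hxK'
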